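/- Let $H$ be a finite-dimensional real Hilbert space, let $W \colon H \to 2^H$ be maximally monotone, let $\alpha > 0$, let $C \colon H \to H$ be $\alpha$-cocoercive, and set $Z = \operatorname{zer}(W + C)$. Let $(x_n)$, $(w_n)$, $(q_n)$, $(w_n^*)$ be sequences of $H$-valued random variables such that almost surely, for every $n$, $(w_n, w_n^*) \in \operatorname{gra} W$, and suppose $x_n - w_n \to 0$, $w_n - q_n \to 0$, and $w_n^* + C q_n \to 0$, all in probability, and that the sequence $(\|x_n\|)_{n\in\mathbb{N}}$ is bounded almost surely. Then almost surely the sequence $(x_n)$ has at least one cluster point in $Z$. -/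

import Mathlib

open MeasureTheory Filter
open scoped RealInnerProductSpace

private lemma tim_comp {Ω H : Type*} [MeasurableSpace Ω] [NormedAddCommGroup H]
    {P : Measure Ω} {f : ℕ → Ω → H} {g : Ω → H}
    (h : TendstoInMeasure P f atTop g) {φ : ℕ → ℕ} (hφ : StrictMono φ) :
    TendstoInMeasure P (fun n => f (φ n)) atTop g :=
  fun ε hε => (h ε hε).comp hφ.tendsto_atTop

theorem stmt15 {Ω H : Type*} [MeasurableSpace Ω]
    [NormedAddCommGroup H] [InnerProductSpace ℝ H] [FiniteDimensional ℝ H]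
    (P : Measure Ω) [IsProbabilityMeasure P]
    (W : H → Set H)
    (hWmono : ∀ x x' y y', x' ∈ W x → y' ∈ W y → 0 ≤ ⟪x - y, x' - y'⟫)
    (hWmax : ∀ x x', (∀ y y', y' ∈ W y → 0 ≤ ⟪x - y, x' - y'⟫) → x' ∈ W x)
    (α : ℝ) (hα : 0 < α) (C : H → H)
    (hC : ∀ x y, α * ‖C x - C y‖ ^ 2 ≤ ⟪x - y, C x - C y⟫)
    (x w q w' : ℕ → Ω → H)
    (hgraph : ∀ᵐ ω ∂P, ∀ n, w' n ω ∈ W (w n ω))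
    (h1 : TendstoInMeasure P (fun n ω => x n ω - w n ω) atTop (0 : Ω → H))
    (h2 : TendstoInMeasure P (fun n ω => w n ω - q n ω) atTop (0 : Ω → H))
    (h3 : TendstoInMeasure P (fun n ω => w' n ω + C (q n ω)) atTop (0 : Ω → H))
    (hbdd : ∀ᵐ ω ∂P, ∃ M : ℝ, ∀ n, ‖x n ω‖ ≤ M) :
    ∀ᵐ ω ∂P, ∃ c : H, -(C c) ∈ W c ∧
      ∃ φ : ℕ → ℕ, StrictMono φ ∧ Tendsto (fun n => x (φ n) ω) atTop (nhds c) := by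
  -- C is Lipschitz with constant α⁻¹, hence continuous
  have hClip : ∀ a b : H, ‖C a - C b‖ ≤ α⁻¹ * ‖a - b‖ := by
    intro a b
    rcases eq_or_ne (C a) (C b) with h | h
    · rw [sub_eq_zero.2 h, norm_zero]; positivity
    · have h0 : 0 < ‖C a - C b‖ := norm_pos_iff.2 (sub_ne_zero.2 h)
      have hle : α * ‖C a - C b‖ ^ 2 ≤ ‖a - b‖ * ‖C a - C b‖ :=
        (hC a b).trans (real_inner_le_norm _ _)
      rw [le_inv_mul_iff₀ hα]
      nlinarith
  have hCcont : Continuous C := by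
    apply (LipschitzWith.of_dist_le_mul (K := ⟨α⁻¹, by positivity⟩) ?_).continuous
    intro a b
    simp only [dist_eq_norm]; exact hClip a b
  -- extract a common a.e.-convergent subsequence
  obtain ⟨n1, hn1, hae1⟩ := h1.exists_seq_tendsto_ae
  obtain ⟨n2, hn2, hae2⟩ := (tim_comp h2 hn1).exists_seq_tendsto_ae
  obtain ⟨n3, hn3, hae3⟩ := (tim_comp (tim_comp h3 hn1) hn2).exists_seq_tendsto_ae
  have hψ : StrictMono (fun k => n1 (n2 (n3 k))) := hn1.comp (hn2.comp hn3)
  filter_upwards [hgraph, hae1, hae2, hae3, hbdd] with ω hgr h1ω h2ω h3ω hBω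
  -- at this ω, along ψ: (x-w) → 0, (w-q) → 0, (w'+Cq) → 0
  have h1ω' : Tendsto (fun k => x (n1 (n2 (n3 k))) ω - w (n1 (n2 (n3 k))) ω) atTop (nhds 0) := by
    exact h1ω.comp (hn2.comp hn3).tendsto_atTop
  have h2ω' : Tendsto (fun k => w (n1 (n2 (n3 k))) ω - q (n1 (n2 (n3 k))) ω) atTop (nhds 0) := by
    exact h2ω.comp hn3.tendsto_atTop
  have h3ω' : Tendsto (fun k => w' (n1 (n2 (n3 k))) ω + C (q (n1 (n2 (n3 k))) ω)) atTop (nhds 0) := by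
    simpa using h3ω
  set ψ : ℕ → ℕ := fun k => n1 (n2 (n3 k)) with hψdef
  -- Bolzano-Weierstrass on the bounded sequence x (ψ k) ω
  obtain ⟨M, hM⟩ := hBω
  have hbd : Bornology.IsBounded (Metric.closedBall (0 : H) M) := Metric.isBounded_closedBall
  have hmem : ∀ k, x (ψ k) ω ∈ Metric.closedBall (0 : H) M := fun k => by
    simpa [Metric.mem_closedBall, dist_eq_norm] using hM (ψ k)
  obtain ⟨c, -, φ, hφ, hcφ⟩ := tendsto_subseq_of_bounded hbd hmem
  refine ⟨c, ?_, ψ ∘ φ, hψ.comp hφ, hcφ⟩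
  -- limits along ψ ∘ φ
  have hxc : Tendsto (fun k => x (ψ (φ k)) ω) atTop (nhds c) := hcφ
  have hwc : Tendsto (fun k => w (ψ (φ k)) ω) atTop (nhds c) := by
    have := hxc.sub (h1ω'.comp hφ.tendsto_atTop)
    simpa [hψdef] using this
  have hqc : Tendsto (fun k => q (ψ (φ k)) ω) atTop (nhds c) := by
    have := hwc.sub (h2ω'.comp hφ.tendsto_atTop)
    simpa [hψdef] using this
  have hw'c : Tendsto (fun k => w' (ψ (φ k)) ω) atTop (nhds (-(C c))) := by
    have hCq : Tendsto (fun k => C (q (ψ (φ k)) ω)) atTop (nhds (C c)) :=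
      (hCcont.tendsto c).comp hqc
    have := (h3ω'.comp hφ.tendsto_atTop).sub hCq
    simpa [sub_eq_add_neg, add_assoc, hψdef] using this
  -- maximality gives -(C c) ∈ W c
  refine hWmax c (-(C c)) fun y y' hy => ?_
  have hineq : ∀ k, 0 ≤ ⟪w (ψ (φ k)) ω - y, w' (ψ (φ k)) ω - y'⟫ := fun k =>
    hWmono _ _ _ _ (hgr (ψ (φ k))) hy
  have hlim : Tendsto (fun k => ⟪w (ψ (φ k)) ω - y, w' (ψ (φ k)) ω - y'⟫) atTop
      (nhds ⟪c - y, -(C c) - y'⟫) := by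
    exact Tendsto.inner (hwc.sub tendsto_const_nhds) (hw'c.sub tendsto_const_nhds)
  exact le_of_tendsto_of_tendsto tendsto_const_nhds hlim (Eventually.of_forall hineq)
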